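/- For a symmetric friend-oriented hedonic game, each player in S_w (players outside P_w with exactly one friend outside P_w) has no friend in P_w. -/

import Mathlib

open Finset

section HedonicDefs

variable {α : Type*} [DecidableEq α] [Fintype α]

/-- Additive utility of player `i` in coalition `S`. -/
def util (w : α → α → ℤ) (S : Finset α) (i : α) : ℤ := ∑ j ∈ S, w i j

/-- `π` is a partition of the player set `V`: every player of `V` lies in its own
coalition, coalitions are contained in `V`, and membership determines the coalition. -/
def IsPartition (V : Finset α) (π : α → Finset α) : Prop :=
  (∀ i ∈ V, i ∈ π i ∧ π i ⊆ V) ∧ ∀ i ∈ V, ∀ j ∈ π i, π j = π i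

/-- `S` is a coalition of the partition `π` on `V`, or the empty coalition. -/
def IsCoalitionOf (V : Finset α) (π : α → Finset α) (S : Finset α) : Prop :=
  S = ∅ ∨ ∃ j ∈ V, S = π j

/-- Player `i` has an NS-deviation from `π i` to `S`. -/
def NSDev (w : α → α → ℤ) (V : Finset α) (π : α → Finset α) (i : α) (S : Finset α) : Prop :=
  IsCoalitionOf V π S ∧ S ≠ π i ∧ i ∉ S ∧ util w (π i) i < util w (insert i S) i

/-- Player `i` has an IS-deviation from `π i` to `S`: an NS-deviation accepted by
all members of the target coalition `S`. -/
def ISDev (w : α → α → ℤ) (V : Finset α) (π : α → Finset α) (i : α) (S : Finset α) : Prop :=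
  NSDev w V π i S ∧ ∀ j ∈ S, util w S j ≤ util w (insert i S) j

/-- Player `i` has a CIS-deviation from `π i` to `S`: an IS-deviation also accepted by
all members of the abandoned coalition. -/
def CISDev (w : α → α → ℤ) (V : Finset α) (π : α → Finset α) (i : α) (S : Finset α) : Prop :=
  ISDev w V π i S ∧ ∀ j ∈ (π i).erase i, util w (π i) j ≤ util w ((π i).erase i) j

def NashStable (w : α → α → ℤ) (V : Finset α) (π : α → Finset α) : Prop :=
  ∀ i ∈ V, ∀ S : Finset α, ¬ NSDev w V π i S

def IndStable (w : α → α → ℤ) (V : Finset α) (π : α → Finset α) : Prop :=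
  ∀ i ∈ V, ∀ S : Finset α, ¬ ISDev w V π i S

def CIStable (w : α → α → ℤ) (V : Finset α) (π : α → Finset α) : Prop :=
  ∀ i ∈ V, ∀ S : Finset α, ¬ CISDev w V π i S

/-- Individual rationality: each player weakly prefers its coalition to being alone
(being alone gives utility `w i i = 0`). -/
def IndRational (w : α → α → ℤ) (V : Finset α) (π : α → Finset α) : Prop :=
  ∀ i ∈ V, 0 ≤ util w (π i) i

/-- Core stability: no nonempty coalition strongly blocks `π`. -/
def CoreStable (w : α → α → ℤ) (V : Finset α) (π : α → Finset α) : Prop :=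
  ¬ ∃ S : Finset α, S ⊆ V ∧ S.Nonempty ∧ ∀ i ∈ S, util w (π i) i < util w S i

/-- `π` is robust for the stability notion `St` under deletion of at most `k` players:
`π` satisfies `St` and so does its truncation after removing any `X` with `|X| ≤ k`. -/
def Robust (St : Finset α → (α → Finset α) → Prop) (V : Finset α)
    (π : α → Finset α) (k : ℕ) : Prop :=
  St V π ∧ ∀ X ⊆ V, X.card ≤ k → St (V \ X) (fun i => π i \ X)

/-- Symmetric friend-oriented game: symmetric weights, zero on the diagonal, and each
off-diagonal weight equals `n` (friends) or `-1` (enemies), where `n` is the number of players. -/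
def FriendOriented (w : α → α → ℤ) : Prop :=
  (∀ i j : α, w i j = w j i) ∧ (∀ i : α, w i i = 0) ∧
    ∀ i j : α, i ≠ j → w i j = (Fintype.card α : ℤ) ∨ w i j = -1

/-- `j` is a friend of `i`. -/
def Friend (w : α → α → ℤ) (i j : α) : Prop := i ≠ j ∧ 0 < w i j


instance (w : α → α → ℤ) (i j : α) : Decidable (Friend w i j) :=
  inferInstanceAs (Decidable (_ ∧ _))

/-- `S` is a clique of the friendship graph. -/
def IsClique (w : α → α → ℤ) (S : Finset α) : Prop :=
  ∀ i ∈ S, ∀ j ∈ S, i ≠ j → Friend w i j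

/-- Two players lie in the same connected component of the friendship graph. -/
def SameComp (w : α → α → ℤ) : α → α → Prop :=
  Relation.ReflTransGen (fun a b => Friend w a b)

/-- The connected component of `v` in the friendship graph, as a set. -/
def comp (w : α → α → ℤ) (v : α) : Set α := {u | SameComp w v u}

end HedonicDefs
section ElimDefs

variable {α : Type*} [DecidableEq α] [Fintype α]

/-- Friendship within the subgame on vertex set `V`. -/
def FriendIn (w : α → α → ℤ) (V : Set α) (i j : α) : Prop :=
  i ∈ V ∧ j ∈ V ∧ Friend w i j

/-- `j` is the unique friend of `i` in the subgraph induced by `V`. -/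
def UniqueFriendIn (w : α → α → ℤ) (V : Set α) (i j : α) : Prop :=
  FriendIn w V i j ∧ ∀ l : α, FriendIn w V i l → l = j

/-- `v` is a leaf (degree-one vertex) of the subgraph induced by `V`. -/
def LeafIn (w : α → α → ℤ) (V : Set α) (v : α) : Prop :=
  v ∈ V ∧ ∃! u : α, FriendIn w V v u

/-- `j` is a pseudo-center of the subgraph induced by `V`:
at most one neighbor of `j` is a non-leaf. -/
def PseudoCenterIn (w : α → α → ℤ) (V : Set α) (j : α) : Prop :=
  ∀ u u' : α, FriendIn w V j u → ¬ LeafIn w V u →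
    FriendIn w V j u' → ¬ LeafIn w V u' → u = u'

/-- Players removed by a list of pairs. -/
def removed (L : List (α × α)) : Set α := {v | ∃ p ∈ L, v = p.1 ∨ v = p.2}

/-- `L` is an outer elimination sequence: at each step `t`, in the graph `G_t` obtained
by deleting all earlier pairs, `j_t` is the unique friend of `i_t` and, moreover,
(E1) `j_t` is a pseudo-center of `G_t`, or (E2) `i_t` is a friend of an earlier-removed player. -/
def IsElimSeq (w : α → α → ℤ) (L : List (α × α)) : Prop :=
  ∀ (t : ℕ) (h : t < L.length),
    UniqueFriendIn w {v | v ∉ removed (L.take t)} (L.get ⟨t, h⟩).1 (L.get ⟨t, h⟩).2 ∧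
      (PseudoCenterIn w {v | v ∉ removed (L.take t)} (L.get ⟨t, h⟩).2 ∨
        ∃ q ∈ removed (L.take t), Friend w (L.get ⟨t, h⟩).1 q)

/-- `{i, j}` is an elimination pair: it appears in some outer elimination sequence. -/
def ElimPair (w : α → α → ℤ) (i j : α) : Prop :=
  ∃ L : List (α × α), IsElimSeq w L ∧ (i, j) ∈ L

/-- `P_w`: the players belonging to some elimination pair. -/
def Pset (w : α → α → ℤ) : Set α :=
  {v | ∃ i j : α, ElimPair w i j ∧ (v = i ∨ v = j)}

/-- `S_w`: players outside `P_w` with exactly one friend outside `P_w`. -/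
def Sset (w : α → α → ℤ) : Set α :=
  {v | v ∉ Pset w ∧ ∃! u : α, u ∉ Pset w ∧ Friend w v u}

/-- `B_w`: players with at least two friends outside `P_w ∪ S_w`. -/
def Bset (w : α → α → ℤ) : Set α :=
  {v | ∃ u u' : α, u ≠ u' ∧ u ∉ Pset w ∪ Sset w ∧ u' ∉ Pset w ∪ Sset w ∧
    Friend w v u ∧ Friend w v u'}

/-- `R_w`: the remaining players. -/
def Rset (w : α → α → ℤ) : Set α := {v | v ∉ Pset w ∪ Sset w ∪ Bset w}

end ElimDefs

set_option linter.unusedSectionVars false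

section Aux

variable {α : Type*} [DecidableEq α] [Fintype α]

lemma friend_symm {w : α → α → ℤ} (hw : FriendOriented w) {i j : α} (h : Friend w i j) :
    Friend w j i := ⟨h.1.symm, by rw [hw.1 j i]; exact h.2⟩

lemma mem_removed_iff {L : List (α × α)} {z : α} :
    z ∈ removed L ↔ ∃ s : ℕ, ∃ hs : s < L.length,
      z = (L.get ⟨s, hs⟩).1 ∨ z = (L.get ⟨s, hs⟩).2 := by
  constructor
  · rintro ⟨p, hp, hz⟩
    obtain ⟨⟨s, hs⟩, rfl⟩ := List.mem_iff_get.mp hp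
    exact ⟨s, hs, hz⟩
  · rintro ⟨s, hs, hz⟩
    exact ⟨L.get ⟨s, hs⟩, L.get_mem _, hz⟩

lemma mem_removed_take_iff {L : List (α × α)} {t : ℕ} {z : α} :
    z ∈ removed (L.take t) ↔ ∃ s : ℕ, ∃ hs : s < L.length, s < t ∧
      (z = (L.get ⟨s, hs⟩).1 ∨ z = (L.get ⟨s, hs⟩).2) := by
  rw [mem_removed_iff]
  constructor
  · rintro ⟨s, hs, hz⟩
    have hs' : s < L.length := lt_of_lt_of_le hs (by simp [List.length_take])
    have hst : s < t := lt_of_lt_of_le hs (by simp [List.length_take])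
    refine ⟨s, hs', hst, ?_⟩
    have : (L.take t).get ⟨s, hs⟩ = L.get ⟨s, hs'⟩ := by
      simp [List.get_eq_getElem, List.getElem_take]
    rwa [this] at hz
  · rintro ⟨s, hs, hst, hz⟩
    have hs' : s < (L.take t).length := by simp [List.length_take]; omega
    refine ⟨s, hs', ?_⟩
    have : (L.take t).get ⟨s, hs'⟩ = L.get ⟨s, hs⟩ := by
      simp [List.get_eq_getElem, List.getElem_take]
    rwa [this]

lemma removed_take_mono {L : List (α × α)} {s t : ℕ} (h : s ≤ t) :
    removed (L.take s) ⊆ removed (L.take t) := by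
  intro z hz
  rw [mem_removed_take_iff] at hz ⊢
  obtain ⟨r, hr, hrs, hz⟩ := hz
  exact ⟨r, hr, lt_of_lt_of_le hrs h, hz⟩

lemma removed_take_subset {L : List (α × α)} (t : ℕ) :
    removed (L.take t) ⊆ removed L := by
  intro z hz
  rw [mem_removed_take_iff] at hz
  obtain ⟨r, hr, _, hz⟩ := hz
  exact mem_removed_iff.mpr ⟨r, hr, hz⟩

lemma comp_mem_removed_take {L : List (α × α)} {s t : ℕ} (hs : s < L.length) (hst : s < t)
    {z : α} (hz : z = (L.get ⟨s, hs⟩).1 ∨ z = (L.get ⟨s, hs⟩).2) :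
    z ∈ removed (L.take t) :=
  mem_removed_take_iff.mpr ⟨s, hs, hst, hz⟩

lemma comp_mem_removed {L : List (α × α)} {s : ℕ} (hs : s < L.length)
    {z : α} (hz : z = (L.get ⟨s, hs⟩).1 ∨ z = (L.get ⟨s, hs⟩).2) :
    z ∈ removed L :=
  mem_removed_iff.mpr ⟨s, hs, hz⟩

lemma removed_nil : removed ([] : List (α × α)) = ∅ := by
  ext z; simp [removed]

lemma mem_removed_append_iff {L : List (α × α)} {p : α × α} {z : α} :
    z ∈ removed (L ++ [p]) ↔ z ∈ removed L ∨ z = p.1 ∨ z = p.2 := by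
  constructor
  · rintro ⟨q, hq, hz⟩
    rcases List.mem_append.mp hq with hq | hq
    · exact Or.inl ⟨q, hq, hz⟩
    · simp only [List.mem_singleton] at hq; subst hq; exact Or.inr hz
  · rintro (⟨q, hq, hz⟩ | hz)
    · exact ⟨q, List.mem_append.mpr (Or.inl hq), hz⟩
    · exact ⟨p, List.mem_append.mpr (Or.inr (by simp)), hz⟩

/-- Vertices with no incident friendship edge in the graph remaining after `L`
(this includes all removed vertices). -/
def DeadIn (w : α → α → ℤ) (L : List (α × α)) : Set α :=
  {z | ∀ u, ¬ FriendIn w {v | v ∉ removed L} z u}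

lemma removed_subset_dead {w : α → α → ℤ} {L : List (α × α)} {z : α}
    (hz : z ∈ removed L) : z ∈ DeadIn w L := by
  intro u hu
  exact hu.1 hz

lemma dead_mono {w : α → α → ℤ} {L L' : List (α × α)}
    (h : removed L ⊆ removed L') : DeadIn w L ⊆ DeadIn w L' := by
  intro z hz u hu
  exact hz u ⟨fun hc => hu.1 (h hc), fun hc => hu.2.1 (h hc), hu.2.2⟩

lemma elim_append {w : α → α → ℤ} {L : List (α × α)} (hL : IsElimSeq w L) {x y : α}
    (hUF : UniqueFriendIn w {v | v ∉ removed L} x y)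
    (hE : PseudoCenterIn w {v | v ∉ removed L} y ∨ ∃ q ∈ removed L, Friend w x q) :
    IsElimSeq w (L ++ [(x, y)]) := by
  intro t h
  have h' : t < L.length + 1 := by simpa using h
  rcases lt_or_ge t L.length with ht | ht
  · have hget : (L ++ [(x, y)]).get ⟨t, h⟩ = L.get ⟨t, ht⟩ := by
      simp only [List.get_eq_getElem]
      rw [List.getElem_append_left]
    have htake : (L ++ [(x, y)]).take t = L.take t :=
      List.take_append_of_le_length (le_of_lt ht)
    rw [hget, htake]
    exact hL t ht
  · have ht' : t = L.length := by omega
    subst ht'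
    have hget : (L ++ [(x, y)]).get ⟨L.length, h⟩ = (x, y) := by
      simp [List.get_eq_getElem, List.getElem_concat_length]
    have htake : (L ++ [(x, y)]).take L.length = L :=
      (List.take_append_of_le_length le_rfl).trans List.take_length
    rw [hget, htake]
    exact ⟨hUF, hE⟩

lemma elim_pair_of_mem {w : α → α → ℤ} {L : List (α × α)} (hL : IsElimSeq w L)
    {p : α × α} (hp : p ∈ L) : ElimPair w p.1 p.2 := ⟨L, hL, hp⟩

lemma removed_subset_Pset {w : α → α → ℤ} {L : List (α × α)} (hL : IsElimSeq w L) :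
    removed L ⊆ Pset w := by
  rintro z ⟨p, hp, hz⟩
  exact ⟨p.1, p.2, elim_pair_of_mem hL hp, hz⟩

/-- The key impossibility ("infinite descent") lemma: there is no vertex `z` that is
removed as an `i`-component (with unique friend) in elim seq `S` at step `σ`, and as a
`j`-component in elim seq `T` at step `τ` with an `i`-partner already removed in
`S.take σ`. -/
lemma no_double {w : α → α → ℤ} (hw : FriendOriented w) :
    ∀ (n : ℕ) (S T : List (α × α)), IsElimSeq w S → IsElimSeq w T →
    ∀ (σ τ : ℕ) (hσ : σ < S.length) (hτ : τ < T.length), σ + τ ≤ n →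
    (T.get ⟨τ, hτ⟩).2 = (S.get ⟨σ, hσ⟩).1 →
    (T.get ⟨τ, hτ⟩).1 ∈ removed (S.take σ) → False := by
  intro n
  induction n using Nat.strong_induction_on with
  | _ n ih =>
    intro S T hS hT σ τ hσ hτ hn heq hmem
    obtain ⟨hUFS, -⟩ := hS σ hσ
    obtain ⟨hUFT, -⟩ := hT τ hτ
    rw [heq] at hUFT
    have hzS : (S.get ⟨σ, hσ⟩).1 ∉ removed (S.take σ) := hUFS.1.1
    obtain ⟨ρ, hρ, hρσ, hpcomp⟩ := mem_removed_take_iff.mp hmem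
    obtain ⟨hUFρ, -⟩ := hS ρ hρ
    rcases hpcomp with hp1 | hp2
    · -- the partner is an i-component in S at ρ: its unique friend must be z
      rw [← hp1] at hUFρ
      have hzρ : (S.get ⟨σ, hσ⟩).1 ∉ removed (S.take ρ) :=
        fun hc => hzS (removed_take_mono hρσ.le hc)
      have h2 : (S.get ⟨σ, hσ⟩).1 = (S.get ⟨ρ, hρ⟩).2 :=
        hUFρ.2 _ ⟨hUFρ.1.1, hzρ, hUFT.1.2.2⟩
      exact hzS (comp_mem_removed_take hρ hρσ (Or.inr h2))
    · -- the partner is a j-component in S at ρ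
      rw [← hp2] at hUFρ
      have hqmem : (S.get ⟨ρ, hρ⟩).1 ∈ removed (T.take τ) := by
        by_contra hc
        have hq : (S.get ⟨ρ, hρ⟩).1 = (S.get ⟨σ, hσ⟩).1 :=
          hUFT.2 _ ⟨hUFT.1.1, hc, friend_symm hw hUFρ.1.2.2⟩
        exact hzS (comp_mem_removed_take hρ hρσ (Or.inl hq.symm))
        
      exact ih (τ + ρ) (by omega) T S hT hS τ ρ hτ hρ le_rfl hp2.symm hqmem

/-- Simulation / merge lemma: any elimination sequence `M` can be "replayed" on top of
an elimination sequence `N`: there is an elimination sequence extending the removals of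
`N` such that every player removed by `M` ends up removed or isolated. -/
lemma sim {w : α → α → ℤ} (hw : FriendOriented w) {M N : List (α × α)}
    (hM : IsElimSeq w M) (hN : IsElimSeq w N) :
    ∀ t : ℕ, ∃ N' : List (α × α), IsElimSeq w N' ∧ removed N ⊆ removed N' ∧
      removed (M.take t) ⊆ DeadIn w N' := by
  intro t
  induction t with
  | zero =>
    refine ⟨N, hN, subset_rfl, ?_⟩
    intro z hz
    rw [List.take_zero, removed_nil] at hz
    exact absurd hz (Set.notMem_empty z)
  | succ t ih =>
    obtain ⟨N', hN', hsub, hinv⟩ := ih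
    by_cases ht : t < M.length
    case neg =>
      have heq : M.take (t + 1) = M.take t := by
        rw [List.take_of_length_le (by omega), List.take_of_length_le (by omega)]
      exact ⟨N', hN', hsub, heq ▸ hinv⟩
    case pos =>
    obtain ⟨hUF, hE⟩ := hM t ht
    set x := (M.get ⟨t, ht⟩).1 with hxdef
    set y := (M.get ⟨t, ht⟩).2 with hydef
    have hxM : x ∉ removed (M.take t) := hUF.1.1
    have hyM : y ∉ removed (M.take t) := hUF.1.2.1
    have hxy : Friend w x y := hUF.1.2.2
    have hx_unique : ∀ l, l ∉ removed (M.take t) → Friend w x l → l = y :=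
      fun l hl hf => hUF.2 l ⟨hxM, hl, hf⟩
    have hstep : ∀ z ∈ removed (M.take (t + 1)),
        z ∈ removed (M.take t) ∨ z = x ∨ z = y := by
      intro z hz
      obtain ⟨s, hs, hst, hzc⟩ := mem_removed_take_iff.mp hz
      rcases Nat.lt_or_ge s t with h1 | h1
      · exact Or.inl (mem_removed_take_iff.mpr ⟨s, hs, h1, hzc⟩)
      · have hst' : s = t := by omega
        subst hst'
        exact Or.inr hzc
    by_cases hyD : y ∈ DeadIn w N'
    · -- the j-component is already dead: then so is the i-component
      refine ⟨N', hN', hsub, ?_⟩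
      have hxD : x ∈ DeadIn w N' := by
        intro u hu
        by_cases humem : u ∈ removed (M.take t)
        · exact hinv humem x ⟨hu.2.1, hu.1, friend_symm hw hu.2.2⟩
        · have huy : u = y := hx_unique u humem hu.2.2
          subst huy
          exact hyD x ⟨hu.2.1, hu.1, friend_symm hw hu.2.2⟩
      intro z hz
      rcases hstep z hz with h | h | h
      · exact hinv h
      · rwa [h]
      · rwa [h]
    · have hyR : y ∉ removed N' := fun hc => hyD (removed_subset_dead hc)
      by_cases hxR : x ∈ removed N'
      · -- impossible by the descent lemma
        exfalso
        obtain ⟨r, hr, hxc⟩ := mem_removed_iff.mp hxR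
        obtain ⟨hUFr, -⟩ := hN' r hr
        rcases hxc with hx1 | hx2
        · -- x is an i-component of N' at r: its unique friend there must be y
          rw [← hx1] at hUFr
          have h2 : y = (N'.get ⟨r, hr⟩).2 :=
            hUFr.2 y ⟨hUFr.1.1, fun hc => hyR (removed_take_subset r hc), hxy⟩
          exact hyR (comp_mem_removed hr (Or.inr h2))
        · -- x is a j-component of N' at r with i-partner a
          rw [← hx2] at hUFr
          have hax : Friend w (N'.get ⟨r, hr⟩).1 x := hUFr.1.2.2
          have haM : (N'.get ⟨r, hr⟩).1 ∈ removed (M.take t) := by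
            by_contra hc
            have hay : (N'.get ⟨r, hr⟩).1 = y := hx_unique _ hc (friend_symm hw hax)
            exact hyR (hay ▸ comp_mem_removed hr (Or.inl rfl))
          obtain ⟨s, hs, hst, hac⟩ := mem_removed_take_iff.mp haM
          obtain ⟨hUFs, -⟩ := hM s hs
          rcases hac with ha1 | ha2
          · -- a is an i-component of M at s: its unique friend there must be x
            rw [← ha1] at hUFs
            have hxs : x ∉ removed (M.take s) :=
              fun hc => hxM (removed_take_mono hst.le hc)
            have h2 : x = (M.get ⟨s, hs⟩).2 :=
              hUFs.2 x ⟨hUFs.1.1, hxs, hax⟩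
            exact hxM (comp_mem_removed_take hs hst (Or.inr h2))
          · -- a is a j-component of M at s with i-partner b; b is removed in N'.take r
            rw [← ha2] at hUFs
            have hbmem : (M.get ⟨s, hs⟩).1 ∈ removed (N'.take r) := by
              by_contra hc
              have hb : (M.get ⟨s, hs⟩).1 = x :=
                hUFr.2 _ ⟨hUFr.1.1, hc, friend_symm hw hUFs.1.2.2⟩
              exact hxM (comp_mem_removed_take hs hst (Or.inl hb.symm))
            exact no_double hw (r + s) N' M hN' hM r s hr hs le_rfl ha2.symm hbmem
      · -- we can append the pair (x, y) to N'
        have hUF' : UniqueFriendIn w {v | v ∉ removed N'} x y := by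
          refine ⟨⟨hxR, hyR, hxy⟩, ?_⟩
          intro l hl
          by_cases hlM : l ∈ removed (M.take t)
          · exact absurd (⟨hl.2.1, hl.1, friend_symm hw hl.2.2⟩ :
              FriendIn w {v | v ∉ removed N'} l x) (hinv hlM x)
          · exact hx_unique l hlM hl.2.2
        have hE' : PseudoCenterIn w {v | v ∉ removed N'} y ∨
            ∃ q ∈ removed N', Friend w x q := by
          rcases hE with hE1 | ⟨q, hq, hfq⟩
          · left
            intro u u' h1 h2 h3 h4
            have key : ∀ v', FriendIn w {v | v ∉ removed N'} y v' →
                ¬ LeafIn w {v | v ∉ removed N'} v' →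
                FriendIn w {v | v ∉ removed (M.take t)} y v' ∧
                  ¬ LeafIn w {v | v ∉ removed (M.take t)} v' := by
              intro v' h5 h6
              have hvM : v' ∉ removed (M.take t) := by
                intro hc
                exact hinv hc y ⟨h5.2.1, h5.1, friend_symm hw h5.2.2⟩
              refine ⟨⟨hyM, hvM, h5.2.2⟩, ?_⟩
              rintro ⟨-, f, hf, hfuniq⟩
              have hnotex : ¬ ∃! g, FriendIn w {v | v ∉ removed N'} v' g :=
                fun hg => h6 ⟨h5.2.1, hg⟩
              have hy' : FriendIn w {v | v ∉ removed N'} v' y :=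
                ⟨h5.2.1, h5.1, friend_symm hw h5.2.2⟩
              have hgg : ∃ g, FriendIn w {v | v ∉ removed N'} v' g ∧ g ≠ y := by
                by_contra hcon
                push_neg at hcon
                exact hnotex ⟨y, hy', hcon⟩
              obtain ⟨g, hg, hgy⟩ := hgg
              have hgM : g ∉ removed (M.take t) := by
                intro hc
                exact hinv hc v' ⟨hg.2.1, hg.1, friend_symm hw hg.2.2⟩
              have e1 : g = f := hfuniq g ⟨hvM, hgM, hg.2.2⟩
              have e2 : y = f := hfuniq y ⟨hvM, hyM, friend_symm hw h5.2.2⟩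
              exact hgy (e1.trans e2.symm)
            obtain ⟨hu1, hu2⟩ := key u h1 h2
            obtain ⟨hu1', hu2'⟩ := key u' h3 h4
            exact hE1 u u' hu1 hu2 hu1' hu2'
          · have hqR : q ∈ removed N' := by
              by_contra hc
              exact hinv hq x ⟨hc, hxR, friend_symm hw hfq⟩
            exact Or.inr ⟨q, hqR, hfq⟩
        have hmono : removed N' ⊆ removed (N' ++ [(x, y)]) :=
          fun z hz => mem_removed_append_iff.mpr (Or.inl hz)
        refine ⟨N' ++ [(x, y)], elim_append hN' hUF' hE', fun z hz => hmono (hsub hz), ?_⟩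
        intro z hz
        rcases hstep z hz with h | h | h
        · exact dead_mono hmono (hinv h)
        · exact removed_subset_dead (mem_removed_append_iff.mpr (Or.inr (Or.inl h)))
        · exact removed_subset_dead (mem_removed_append_iff.mpr (Or.inr (Or.inr h)))

open Classical in
/-- There is a single elimination sequence after which every player of `P_w` is removed
or isolated. -/
lemma global_cover {w : α → α → ℤ} (hw : FriendOriented w) :
    ∃ N : List (α × α), IsElimSeq w N ∧ ∀ z ∈ Pset w, z ∈ DeadIn w N := by
  suffices h : ∀ n (N : List (α × α)), IsElimSeq w N →
      (Finset.univ.filter (fun z => z ∈ Pset w ∧ z ∉ DeadIn w N)).card ≤ n →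
      ∃ N', IsElimSeq w N' ∧ ∀ z ∈ Pset w, z ∈ DeadIn w N' by
    exact h _ [] (by intro t ht; simp at ht) le_rfl
  intro n
  induction n with
  | zero =>
    intro N hN hcard
    refine ⟨N, hN, fun z hz => ?_⟩
    by_contra hc
    have hmem : z ∈ Finset.univ.filter (fun z => z ∈ Pset w ∧ z ∉ DeadIn w N) := by
      simp [hz, hc]
    rw [Nat.le_zero, Finset.card_eq_zero] at hcard
    rw [hcard] at hmem
    exact absurd hmem (Finset.notMem_empty z)
  | succ n ih =>
    intro N hN hcard
    by_cases hvio : ∃ z, z ∈ Pset w ∧ z ∉ DeadIn w N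
    · obtain ⟨z, hzP, hzD⟩ := hvio
      obtain ⟨i, j, ⟨L, hL, hijL⟩, hzij⟩ := hzP
      have hzL : z ∈ removed L := ⟨(i, j), hijL, hzij⟩
      obtain ⟨N', hN', hsub, hcov⟩ := sim hw hL hN L.length
      rw [List.take_length] at hcov
      have hzD' : z ∈ DeadIn w N' := hcov hzL
      apply ih N' hN'
      have hzmem : z ∈ Finset.univ.filter (fun z => z ∈ Pset w ∧ z ∉ DeadIn w N) := by
        simp only [Finset.mem_filter, Finset.mem_univ, true_and]
        exact ⟨⟨i, j, ⟨L, hL, hijL⟩, hzij⟩, hzD⟩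
      have hss : Finset.univ.filter (fun z => z ∈ Pset w ∧ z ∉ DeadIn w N') ⊆
          (Finset.univ.filter (fun z => z ∈ Pset w ∧ z ∉ DeadIn w N)).erase z := by
        intro z' hz'
        simp only [Finset.mem_filter, Finset.mem_univ, true_and] at hz'
        have hz'N : z' ∉ DeadIn w N := fun hc => hz'.2 (dead_mono hsub hc)
        have hzz : z' ≠ z := fun hzz => hz'.2 (hzz ▸ hzD')
        rw [Finset.mem_erase]
        constructor
        · exact hzz
        · simp only [Finset.mem_filter, Finset.mem_univ, true_and]
          exact ⟨hz'.1, hz'N⟩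
      have := Finset.card_le_card hss
      rw [Finset.card_erase_of_mem hzmem] at this
      omega
    · refine ⟨N, hN, fun z hz => ?_⟩
      by_contra hc
      exact hvio ⟨z, hz, hc⟩

end Aux

/-- In a symmetric friend-oriented game, each player of `S_w` has no
friend in `P_w`. -/
theorem s_players_no_friend_in_p {α : Type*} [DecidableEq α] [Fintype α]
    (w : α → α → ℤ) (hw : FriendOriented w) :
    ∀ v ∈ Sset w, ∀ u ∈ Pset w, ¬ Friend w v u := by
  intro v hv u hu hfvu
  obtain ⟨hvP, s, ⟨hsP, hvs⟩, huniq⟩ := hv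
  obtain ⟨N, hN, hcov⟩ := global_cover hw
  have hvN : v ∉ removed N := fun hvN => hvP (removed_subset_Pset hN hvN)
  have hsN : s ∉ removed N := fun hsN => hsP (removed_subset_Pset hN hsN)
  -- every friend of v lying in P_w is removed by N (it cannot be isolated, as v remains)
  have hfr : ∀ f, Friend w v f → f ∈ Pset w → f ∈ removed N := by
    intro f hf hfP
    by_contra hc
    exact hcov f hfP v ⟨hc, hvN, friend_symm hw hf⟩
  have hUF : UniqueFriendIn w {v' | v' ∉ removed N} v s := by
    refine ⟨⟨hvN, hsN, hvs⟩, ?_⟩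
    intro l hl
    by_cases hlP : l ∈ Pset w
    · exact absurd (hfr l hl.2.2 hlP) hl.2.1
    · exact huniq l ⟨hlP, hl.2.2⟩
  have hE : PseudoCenterIn w {v' | v' ∉ removed N} s ∨ ∃ q ∈ removed N, Friend w v q :=
    Or.inr ⟨u, hfr u hfvu hu, hfvu⟩
  have hseq := elim_append hN hUF hE
  have hmem : (v, s) ∈ N ++ [(v, s)] := List.mem_append.mpr (Or.inr (by simp))
  exact hvP ⟨v, s, elim_pair_of_mem hseq hmem, Or.inl rfl⟩
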